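/- Let E be a separable real Banach space, let F be a bounded subset of the dual space E*, and let f belong to the weak* closure of the convex hull of F. Then there is a sequence (f_n)_{n≥1} of points of F such that (f_1+⋯+f_N)/N converges to f in the weak* topology of E*, i.e. for every x ∈ E, (1/N)·Σ_{k=1}^N f_k(x) → f(x) as N → ∞. -/

import Mathlib

set_option maxHeartbeats 1000000
open Finset

private lemma wd_sum_apply {E : Type*} [NormedAddCommGroup E] [NormedSpace ℝ E]
    {ι : Type*} (t : Finset ι) (w : ι → ℝ) (z : ι → WeakDual ℝ E) (x : E) :
    (∑ i ∈ t, w i • z i) x = ∑ i ∈ t, w i * z i x := by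
  induction t using Finset.cons_induction with
  | empty => rfl
  | cons a s ha ih => rw [Finset.sum_cons, Finset.sum_cons, ← ih]; rfl

private lemma list_sum_getD' {α : Type*} (l : List α) (φ : α → ℝ) (d : α) :
    (l.map φ).sum = ∑ i ∈ Finset.range l.length, φ (l.getD i d) := by
  induction l with
  | nil => simp
  | cons a l ih =>
    rw [List.map_cons, List.sum_cons, ih, List.length_cons, Finset.sum_range_succ']
    simp [add_comm]

private lemma ratlist {E : Type*} [NormedAddCommGroup E] [NormedSpace ℝ E]
    (F : Set (WeakDual ℝ E)) (f₀ : WeakDual ℝ E) (hf₀ : f₀ ∈ F) (R : ℝ)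
    (hb : ∀ g ∈ F, ∀ x : E, |g x| ≤ R * ‖x‖)
    {g : WeakDual ℝ E} (hg : g ∈ convexHull ℝ F) {ε : ℝ} (hε : 0 < ε) :
    ∃ (b : ℕ → WeakDual ℝ E) (q : ℕ), 0 < q ∧ (∀ i, b i ∈ F) ∧
      ∀ x : E, |(∑ i ∈ Finset.range q, b i x) - q * g x| ≤ ε * q * ‖x‖ := by
  rw [_root_.convexHull_eq, Set.mem_setOf_eq] at hg
  obtain ⟨ι, t, w, z, hw0, hw1, hzF, hcm⟩ := hg
  set K := t.card with hK
  set e := t.equivFin with he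
  set W : ℕ → ℝ := fun j => if h : j < K then w ((e.symm ⟨j, h⟩ : {x // x ∈ t}) : ι) else 0
    with hWdef
  set Z : ℕ → WeakDual ℝ E :=
    fun j => if h : j < K then z ((e.symm ⟨j, h⟩ : {x // x ∈ t}) : ι) else f₀ with hZdef
  have hrei : ∀ (φ : ι → ℝ),
      ∑ j ∈ Finset.range K, (if h : j < K then φ ((e.symm ⟨j, h⟩ : {x // x ∈ t}) : ι) else 0)
        = ∑ i ∈ t, φ i := by
    intro φ
    rw [Finset.sum_range]
    have h1 : ∀ j : Fin K,
        (if h : (j : ℕ) < K then φ ((e.symm ⟨j, h⟩ : {x // x ∈ t}) : ι) else 0)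
          = φ ((e.symm j : {x // x ∈ t}) : ι) := by
      intro j
      rw [dif_pos j.isLt]
    simp_rw [h1]
    rw [Equiv.sum_comp e.symm (fun i : {x // x ∈ t} => φ (i : ι))]
    exact Finset.sum_coe_sort t φ
  have hW0 : ∀ j, 0 ≤ W j := by
    intro j
    simp only [hWdef]
    by_cases h : j < K
    · rw [dif_pos h]; exact hw0 _ (e.symm ⟨j, h⟩).2
    · rw [dif_neg h]
  have hZF : ∀ j, Z j ∈ F := by
    intro j
    simp only [hZdef]
    by_cases h : j < K
    · rw [dif_pos h]; exact hzF _ (e.symm ⟨j, h⟩).2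
    · rw [dif_neg h]; exact hf₀
  have hWZ : ∀ x : E, ∀ j, (if h : j < K then
        (fun i => w i * z i x) ((e.symm ⟨j, h⟩ : {x // x ∈ t}) : ι) else 0) = W j * Z j x := by
    intro x j
    simp only [hWdef, hZdef]
    by_cases h : j < K
    · rw [dif_pos h, dif_pos h, dif_pos h]
    · rw [dif_neg h, dif_neg h]; simp
  have hWsum : ∑ j ∈ Finset.range K, W j = 1 := by
    rw [← hw1, ← hrei w]
  have hgx : ∀ x : E, g x = ∑ j ∈ Finset.range K, W j * Z j x := by
    intro x
    have h1 : g = ∑ i ∈ t, w i • z i := by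
      rw [← hcm, Finset.centerMass_eq_of_sum_1 _ _ hw1]
    rw [h1, wd_sum_apply, ← hrei (fun i => w i * z i x)]
    exact Finset.sum_congr rfl fun j _ => hWZ x j
  -- cumulative sums
  set c : ℕ → ℝ := fun j => ∑ i ∈ Finset.range j, W i with hcdef
  have hcmono : Monotone c := fun a b hab =>
    Finset.sum_le_sum_of_subset_of_nonneg (Finset.range_subset_range.2 hab) (fun i _ _ => hW0 i)
  have hc0 : c 0 = 0 := by simp [hcdef]
  have hcK : c K = 1 := hWsum
  -- choice of q
  set q : ℕ := max 1 ⌈(2 * K * (R + 1)) / ε⌉₊ with hqdef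
  have hq : 0 < q := lt_of_lt_of_le Nat.one_pos (le_max_left _ _)
  have hqR : 2 * K * R ≤ ε * q := by
    have h1 : ((2 : ℝ) * K * (R + 1)) / ε ≤ (⌈(2 * (K : ℝ) * (R + 1)) / ε⌉₊ : ℝ) :=
      Nat.le_ceil _
    have h2 : ((⌈(2 * (K : ℝ) * (R + 1)) / ε⌉₊ : ℕ) : ℝ) ≤ (q : ℝ) :=
      Nat.cast_le.mpr (le_max_right _ _)
    rw [div_le_iff₀ hε] at h1
    nlinarith [Nat.cast_nonneg (α := ℝ) K]
  -- the integer weights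
  have hfm : ∀ j, ⌊c j * q⌋ ≤ ⌊c (j + 1) * q⌋ := fun j =>
    Int.floor_le_floor (by nlinarith [hcmono (Nat.le_succ j), Nat.cast_nonneg (α := ℝ) q])
  set p : ℕ → ℕ := fun j => (⌊c (j + 1) * q⌋ - ⌊c j * q⌋).toNat with hpdef
  have hpz : ∀ j, (p j : ℤ) = ⌊c (j + 1) * q⌋ - ⌊c j * q⌋ := fun j =>
    Int.toNat_of_nonneg (sub_nonneg.2 (hfm j))
  have hpsum : ∑ j ∈ Finset.range K, p j = q := by
    have h1 : ∑ j ∈ Finset.range K, (p j : ℤ) = (q : ℤ) := by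
      have h2 : ∑ j ∈ Finset.range K, ((⌊c (j + 1) * q⌋ - ⌊c j * q⌋)) = (q : ℤ) := by
        rw [Finset.sum_range_sub (fun j => ⌊c j * q⌋), hc0, hcK, one_mul, zero_mul,
          Int.floor_natCast, Int.floor_zero, sub_zero]
      rw [← h2]
      exact Finset.sum_congr rfl fun j _ => hpz j
    exact_mod_cast h1
  have hperr : ∀ j, |(p j : ℝ) - W j * q| ≤ 2 := by
    intro j
    have h1 : ((p j : ℕ) : ℝ) = (⌊c (j + 1) * q⌋ : ℝ) - (⌊c j * q⌋ : ℝ) := by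
      have := hpz j
      exact_mod_cast congrArg (fun n : ℤ => (n : ℝ)) this
    have hWc : W j = c (j + 1) - c j := by
      simp [hcdef, Finset.sum_range_succ]
    have f1 := Int.floor_le (c (j + 1) * q)
    have f2 := Int.sub_one_lt_floor (c (j + 1) * q)
    have f3 := Int.floor_le (c j * q)
    have f4 := Int.sub_one_lt_floor (c j * q)
    rw [abs_le, h1, hWc]
    constructor <;> nlinarith
  -- the list
  set l : List (WeakDual ℝ E) :=
    List.flatten (List.ofFn (fun j : Fin K => List.replicate (p j) (Z j))) with hldef
  have hlen : l.length = q := by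
    rw [hldef, List.length_flatten, List.map_ofFn, List.sum_ofFn]
    simp only [Function.comp, List.length_replicate]
    rw [← Finset.sum_range (fun j => p j), hpsum]
  have hlmem : ∀ h ∈ l, h ∈ F := by
    intro h hh
    rw [hldef, List.mem_flatten] at hh
    obtain ⟨s, hs, hhs⟩ := hh
    rw [List.mem_ofFn] at hs
    obtain ⟨j, rfl⟩ := hs
    rw [List.mem_replicate] at hhs
    rw [hhs.2]
    exact hZF j
  refine ⟨fun i => l.getD i f₀, q, hq, fun i => ?_, fun x => ?_⟩
  · show l.getD i f₀ ∈ F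
    by_cases h : i < l.length
    · rw [List.getD_eq_getElem l f₀ h]
      exact hlmem _ (List.getElem_mem h)
    · rw [List.getD_eq_default l f₀ (le_of_not_gt h)]
      exact hf₀
  · show |(∑ i ∈ Finset.range q, l.getD i f₀ x) - (q : ℝ) * g x| ≤ ε * q * ‖x‖
    have hsum : ∑ i ∈ Finset.range q, l.getD i f₀ x = ∑ j ∈ Finset.range K, (p j : ℝ) * Z j x := by
      have h1 : ∑ i ∈ Finset.range q, l.getD i f₀ x
          = (l.map (fun h : WeakDual ℝ E => h x)).sum := by
        rw [list_sum_getD' l _ f₀, hlen]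
      rw [h1, hldef, List.map_flatten, List.map_ofFn, List.sum_flatten, List.map_ofFn,
        List.sum_ofFn, Finset.sum_range (fun j => (p j : ℝ) * Z j x)]
      refine Finset.sum_congr rfl fun j _ => ?_
      simp [List.map_replicate, List.sum_replicate, nsmul_eq_mul]
    rw [hsum, hgx x, Finset.mul_sum, ← Finset.sum_sub_distrib]
    have hterm : ∀ j ∈ Finset.range K,
        |(p j : ℝ) * Z j x - (q : ℝ) * (W j * Z j x)| ≤ 2 * (R * ‖x‖) := by
      intro j _
      have h1 : (p j : ℝ) * Z j x - (q : ℝ) * (W j * Z j x)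
          = ((p j : ℝ) - W j * q) * Z j x := by ring
      rw [h1, abs_mul]
      have h2 := hb _ (hZF j) x
      have h3 := hperr j
      have h4 : (0:ℝ) ≤ R * ‖x‖ := le_trans (abs_nonneg _) h2
      nlinarith [abs_nonneg ((p j : ℝ) - W j * q), abs_nonneg ((Z j) x)]
    calc |∑ j ∈ Finset.range K, ((p j : ℝ) * Z j x - (q : ℝ) * (W j * Z j x))|
        ≤ ∑ j ∈ Finset.range K, |(p j : ℝ) * Z j x - (q : ℝ) * (W j * Z j x)| :=
          Finset.abs_sum_le_sum_abs _ _
      _ ≤ ∑ _j ∈ Finset.range K, 2 * (R * ‖x‖) := Finset.sum_le_sum hterm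
      _ = K * (2 * (R * ‖x‖)) := by rw [Finset.sum_const, Finset.card_range, nsmul_eq_mul]
      _ ≤ ε * q * ‖x‖ := by nlinarith [norm_nonneg x]



private lemma cycsum (c : ℕ → ℝ) {q : ℕ} (hq : 0 < q) (t : ℕ) :
    ∑ j ∈ Finset.range t, c (j % q)
      = ((t / q : ℕ) : ℝ) * ∑ i ∈ Finset.range q, c i
        + ∑ i ∈ Finset.range (t % q), c i := by
  induction t with
  | zero => simp
  | succ t ih =>
    rw [Finset.sum_range_succ, ih]
    have hlt : t % q < q := Nat.mod_lt _ hq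
    have hdm : q * (t / q) + t % q = t := Nat.div_add_mod t q
    by_cases h : t % q + 1 < q
    · have h1 : (t + 1) % q = t % q + 1 := by
        conv_lhs => rw [← hdm]
        rw [add_assoc, Nat.mul_add_mod, Nat.mod_eq_of_lt h]
      have h2 : (t + 1) / q = t / q := by
        conv_lhs => rw [← hdm]
        rw [add_assoc, Nat.mul_add_div hq, Nat.div_eq_of_lt h, add_zero]
      rw [h1, h2, Finset.sum_range_succ]
      ring
    · have heq : t % q + 1 = q := by omega
      have h1 : (t + 1) % q = 0 := by
        conv_lhs => rw [← hdm, add_assoc, heq, ← Nat.mul_succ]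
        exact Nat.mul_mod_right q _
      have h2 : (t + 1) / q = t / q + 1 := by
        conv_lhs => rw [← hdm, add_assoc, heq, ← Nat.mul_succ]
        exact Nat.mul_div_cancel_left _ hq
      rw [h1, h2]
      have : ∑ i ∈ Finset.range (t % q), c i + c (t % q)
          = ∑ i ∈ Finset.range q, c i := by
        rw [← Finset.sum_range_succ, heq]
      rw [add_assoc, this]
      push_cast
      ring

private lemma list_sum_getD {α : Type*} (l : List α) (φ : α → ℝ) (d : α) :
    (l.map φ).sum = ∑ i ∈ Finset.range l.length, φ (l.getD i d) := by
  induction l with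
  | nil => simp
  | cons a l ih =>
    rw [List.map_cons, List.sum_cons, ih, List.length_cons, Finset.sum_range_succ']
    simp [add_comm]

open Filter Finset



/-- Let `E` be a separable real Banach space, `F` a
(norm-)bounded subset of the dual `E*` and `f` a point of the weak* closure
of the convex hull of `F` (here the dual is carried by `WeakDual ℝ E`, whose
topology is the weak* topology).  Then there is a sequence `(f_n)` in `F`
whose arithmetic means converge to `f` in the weak* topology, i.e. pointwise
on `E`. -/
theorem stmt9 {E : Type*} [NormedAddCommGroup E] [NormedSpace ℝ E] [CompleteSpace E]
    [TopologicalSpace.SeparableSpace E]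
    (F : Set (WeakDual ℝ E)) (hFbdd : ∃ R : ℝ, ∀ g ∈ F, ∀ x : E, |g x| ≤ R * ‖x‖)
    (f : WeakDual ℝ E) (hf : f ∈ closure (convexHull ℝ F)) :
    ∃ seq : ℕ → WeakDual ℝ E, (∀ n, seq n ∈ F) ∧
      ∀ x : E,
        Tendsto (fun N : ℕ => (N : ℝ)⁻¹ * ∑ k ∈ Finset.range N, seq k x)
          atTop (nhds (f x)) := by
  classical
  obtain ⟨R0, hR0⟩ := hFbdd
  set R : ℝ := max R0 0 with hRdef
  have hRpos : (0:ℝ) ≤ R := le_max_right _ _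
  have hR : ∀ g ∈ F, ∀ x : E, |g x| ≤ R * ‖x‖ := fun g hg x =>
    le_trans (hR0 g hg x) (mul_le_mul_of_nonneg_right (le_max_left _ _) (norm_nonneg x))
  have hFne : F.Nonempty := by
    rcases F.eq_empty_or_nonempty with h | h
    · rw [h] at hf; simp [convexHull_empty] at hf
    · exact h
  obtain ⟨f₀, hf₀⟩ := hFne
  -- bound on the convex hull
  have hco : ∀ g ∈ convexHull ℝ F, ∀ x : E, |g x| ≤ R * ‖x‖ := by
    intro g hg x
    have hconv : Convex ℝ {g : WeakDual ℝ E | |g x| ≤ R * ‖x‖} := by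
      intro g1 hg1 g2 hg2 a bb ha hb hab
      simp only [Set.mem_setOf_eq] at hg1 hg2 ⊢
      have he : (a • g1 + bb • g2) x = a * g1 x + bb * g2 x := rfl
      rw [he]
      calc |a * g1 x + bb * g2 x| ≤ |a * g1 x| + |bb * g2 x| := abs_add_le _ _
        _ = a * |g1 x| + bb * |g2 x| := by
            rw [abs_mul, abs_mul, abs_of_nonneg ha, abs_of_nonneg hb]
        _ ≤ a * (R * ‖x‖) + bb * (R * ‖x‖) := by
            gcongr
        _ = R * ‖x‖ := by rw [← add_mul, hab, one_mul]
    exact convexHull_min (fun h hh => hR h hh x) hconv hg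
  have hfb : ∀ x : E, |f x| ≤ R * ‖x‖ := by
    intro x
    have hcl : IsClosed {g : WeakDual ℝ E | |g x| ≤ R * ‖x‖} :=
      isClosed_le ((WeakDual.eval_continuous x).abs) continuous_const
    exact hcl.closure_subset_iff.2 (fun g hg => hco g hg x) hf
  have : Nonempty E := ⟨0⟩
  set u : ℕ → E := TopologicalSpace.denseSeq E with hudef
  have hu : DenseRange u := TopologicalSpace.denseRange_denseSeq E
  -- approximation of f by convex combinations on finitely many points
  have happrox : ∀ n : ℕ, ∀ ε : ℝ, 0 < ε →
      ∃ g ∈ convexHull ℝ F, ∀ i ≤ n, |g (u i) - f (u i)| < ε := by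
    intro n ε hε
    have hopen : IsOpen {g : WeakDual ℝ E | ∀ i ≤ n, |g (u i) - f (u i)| < ε} := by
      have heq : {g : WeakDual ℝ E | ∀ i ≤ n, |g (u i) - f (u i)| < ε}
          = ⋂ i ∈ Set.Iic n, {g : WeakDual ℝ E | |g (u i) - f (u i)| < ε} := by
        ext g; simp [Set.mem_iInter, Set.mem_Iic]
      rw [heq]
      refine Set.Finite.isOpen_biInter (Set.finite_Iic n) (fun i _ => ?_)
      exact isOpen_lt ((WeakDual.eval_continuous (u i)).sub continuous_const).abs
        continuous_const
    have hV : {g : WeakDual ℝ E | ∀ i ≤ n, |g (u i) - f (u i)| < ε} ∈ nhds f :=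
      hopen.mem_nhds (by intro i _; simpa using hε)
    obtain ⟨g, hg1, hg2⟩ := (mem_closure_iff_nhds.1 hf _ hV)
    exact ⟨g, hg2, hg1⟩
  -- blocks with equal weights
  have hlist : ∀ n : ℕ, ∃ (b : ℕ → WeakDual ℝ E) (q : ℕ), 0 < q ∧ (∀ i, b i ∈ F) ∧
      ∀ i ≤ n, |(∑ j ∈ Finset.range q, b j (u i)) - q * f (u i)|
        ≤ q * (1 / (n + 1)) := by
    intro n
    obtain ⟨B, hB0, hBle⟩ : ∃ B : ℝ, 0 ≤ B ∧ ∀ i ≤ n, ‖u i‖ ≤ B := by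
      refine ⟨(Finset.range (n+1)).sup' (Finset.nonempty_range_iff.2 (Nat.succ_ne_zero n))
        (fun i => ‖u i‖), ?_, fun i hi => ?_⟩
      · exact le_trans (norm_nonneg (u 0))
          (Finset.le_sup' (fun i => ‖u i‖) (Finset.mem_range.2 (Nat.succ_pos n)))
      · exact Finset.le_sup' (fun i => ‖u i‖) (Finset.mem_range.2 (Nat.lt_succ_of_le hi))
    have hε₁ : (0:ℝ) < 1 / (2 * (n + 1)) := by positivity
    obtain ⟨g, hgco, hgclose⟩ := happrox n (1 / (2 * (n + 1))) hε₁
    have hε₂ : (0:ℝ) < 1 / (2 * (n + 1)) / (B + 1) := by positivity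
    obtain ⟨b, q, hq, hbF, hberr⟩ := ratlist F f₀ hf₀ R hR hgco hε₂
    refine ⟨b, q, hq, hbF, fun i hi => ?_⟩
    have h1 := hberr (u i)
    have h2 := hgclose i hi
    have h3 : (1 / (2 * ((n:ℝ) + 1)) / (B + 1)) * q * ‖u i‖ ≤ q * (1 / (2 * (n + 1))) := by
      have h4 : ‖u i‖ ≤ B + 1 := le_trans (hBle i hi) (by linarith)
      have h5 : (0:ℝ) < B + 1 := by linarith
      calc (1 / (2 * ((n:ℝ) + 1)) / (B + 1)) * q * ‖u i‖
          ≤ (1 / (2 * ((n:ℝ) + 1)) / (B + 1)) * q * (B + 1) := by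
            apply mul_le_mul_of_nonneg_left h4 (by positivity)
        _ = q * (1 / (2 * (n + 1))) := by field_simp
    calc |(∑ j ∈ Finset.range q, b j (u i)) - q * f (u i)|
        ≤ |(∑ j ∈ Finset.range q, b j (u i)) - q * g (u i)|
            + |(q:ℝ) * g (u i) - q * f (u i)| := by
          have h6 : (∑ j ∈ Finset.range q, b j (u i)) - q * f (u i)
              = ((∑ j ∈ Finset.range q, b j (u i)) - q * g (u i))
                + ((q:ℝ) * g (u i) - q * f (u i)) := by ring
          rw [h6]; exact abs_add_le _ _
      _ ≤ q * (1 / (2 * (n + 1))) + q * (1 / (2 * (n + 1))) := by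
          have h5 : |(q:ℝ) * g (u i) - q * f (u i)| = q * |g (u i) - f (u i)| := by
            rw [← mul_sub, abs_mul, Nat.abs_cast]
          rw [h5]
          exact add_le_add (le_trans h1 h3)
            (mul_le_mul_of_nonneg_left h2.le (Nat.cast_nonneg q))
      _ = q * (1 / (n + 1)) := by field_simp; ring
  choose b q hq hbF hberr using hlist
  -- block lengths
  set P : ℕ → ℕ :=
    fun n => Nat.rec 0 (fun k Pk => Pk + (k * Pk + (k + 1) * q (k + 1) + 1) * q k) n with hPdef
  set m : ℕ → ℕ := fun n => n * P n + (n + 1) * q (n + 1) + 1 with hmdef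
  have hP0 : P 0 = 0 := rfl
  have hPs : ∀ n, P (n + 1) = P n + m n * q n := fun n => rfl
  have hqpos : ∀ n, 0 < q n := hq
  have hmpos : ∀ n, 0 < m n := fun n => by simp only [hmdef]; omega
  have hPstep : ∀ n, P n < P (n + 1) := fun n => by
    have h1 := Nat.mul_pos (hmpos n) (hqpos n)
    have h2 := hPs n
    omega
  have hPmono : StrictMono P := strictMono_nat_of_lt_succ hPstep
  have hPge : ∀ n, n ≤ P n := by
    intro n
    induction n with
    | zero => exact Nat.zero_le _
    | succ k ih => have := hPstep k; omega
  have hPA : ∀ n, (n + 1) * P n ≤ P (n + 1) := by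
    intro n
    have h1 : n * P n ≤ m n := by simp only [hmdef]; omega
    have h2 : m n ≤ m n * q n := Nat.le_mul_of_pos_right _ (hqpos n)
    have h3 := hPs n
    calc (n + 1) * P n = P n + n * P n := by ring
      _ ≤ P n + m n * q n := by omega
      _ = P (n + 1) := (hPs n).symm
  have hPB : ∀ n, (n + 1) * q (n + 1) ≤ P (n + 1) := by
    intro n
    have h1 : (n + 1) * q (n + 1) ≤ m n := by simp only [hmdef]; omega
    have h2 : m n ≤ m n * q n := Nat.le_mul_of_pos_right _ (hqpos n)
    have h3 := hPs n
    omega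
  -- the block index
  set idx : ℕ → ℕ := fun N => Nat.findGreatest (fun k => P k ≤ N) N with hidxdef
  have hidx1 : ∀ N, P (idx N) ≤ N := by
    intro N
    exact Nat.findGreatest_spec (P := fun k => P k ≤ N) (Nat.zero_le N)
      (show P 0 ≤ N by rw [hP0]; exact Nat.zero_le N)
  have hidx2 : ∀ N, N < P (idx N + 1) := by
    intro N
    by_contra hcon
    push_neg at hcon
    rcases le_or_gt (idx N + 1) N with h2 | h2
    · exact Nat.findGreatest_is_greatest (Nat.lt_succ_self _) h2 hcon
    · have := hPge (idx N + 1); omega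
  have hidx3 : ∀ n N, P n ≤ N → N < P (n + 1) → idx N = n := by
    intro n N h1 h2
    rcases lt_trichotomy (idx N) n with h | h | h
    · have h3 : P (idx N + 1) ≤ P n := hPmono.monotone (show idx N + 1 ≤ n by omega)
      have h4 := hidx2 N
      omega
    · exact h
    · have h3 : P (n + 1) ≤ P (idx N) := hPmono.monotone (show n + 1 ≤ idx N by omega)
      have h4 := hidx1 N
      omega
  -- the sequence
  set seq : ℕ → WeakDual ℝ E := fun N => b (idx N) ((N - P (idx N)) % q (idx N)) with hseqdef
  have hseqF : ∀ k, seq k ∈ F := fun k => by simp only [hseqdef]; exact hbF _ _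
  refine ⟨seq, hseqF, ?_⟩
  have hseqb : ∀ n j, P n + j < P (n + 1) → seq (P n + j) = b n (j % q n) := by
    intro n j h
    have h1 : idx (P n + j) = n := hidx3 n _ (Nat.le_add_right _ _) h
    simp only [hseqdef, h1, Nat.add_sub_cancel_left]
  have hblocksum : ∀ (x : E) (n t : ℕ), P n + t ≤ P (n + 1) →
      ∑ k ∈ Finset.range (P n + t), seq k x
        = ∑ k ∈ Finset.range (P n), seq k x
          + ((t / q n : ℕ) : ℝ) * (∑ i ∈ Finset.range (q n), b n i x)
          + ∑ i ∈ Finset.range (t % q n), b n i x := by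
    intro x n t ht
    rw [Finset.sum_range_add]
    have h1 : ∀ j ∈ Finset.range t, seq (P n + j) x = (fun i => b n i x) (j % q n) := by
      intro j hj
      rw [hseqb n j (by have := Finset.mem_range.1 hj; omega)]
    rw [Finset.sum_congr rfl h1, cycsum (fun i => b n i x) (hqpos n) t]
    ring
  -- general bound on sums of elements of F
  have habs : ∀ (x : E) (s : Finset ℕ) (c : ℕ → WeakDual ℝ E), (∀ i, c i ∈ F) →
      |∑ i ∈ s, c i x| ≤ s.card * (R * ‖x‖) := by
    intro x s c hc
    calc |∑ i ∈ s, c i x| ≤ ∑ i ∈ s, |c i x| := Finset.abs_sum_le_sum_abs _ _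
      _ ≤ ∑ _i ∈ s, R * ‖x‖ := Finset.sum_le_sum (fun i _ => hR _ (hc i) x)
      _ = s.card * (R * ‖x‖) := by rw [Finset.sum_const, nsmul_eq_mul]
  -- key quantitative estimate
  have hkey : ∀ (x : E) (ee : ℝ), 0 ≤ ee → ∀ (n N : ℕ), P (n + 1) ≤ N → N < P (n + 2) →
      |(∑ i ∈ Finset.range (q n), b n i x) - q n * f x| ≤ q n * ee →
      |(∑ i ∈ Finset.range (q (n + 1)), b (n + 1) i x) - q (n + 1) * f x| ≤ q (n + 1) * ee →
      |(N : ℝ)⁻¹ * ∑ k ∈ Finset.range N, seq k x - f x|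
        ≤ 2 * ee + 4 * (R * ‖x‖) / (n + 1) := by
    intro x ee hee n N hN1 hN2 hD1 hD2
    have hD0 : (0:ℝ) ≤ R * ‖x‖ := mul_nonneg hRpos (norm_nonneg x)
    have e1 : P (n + 1) = P n + m n * q n := hPs n
    have hfull : ∑ k ∈ Finset.range (P (n + 1)), seq k x
        = ∑ k ∈ Finset.range (P n), seq k x
          + (m n : ℝ) * ∑ i ∈ Finset.range (q n), b n i x := by
      have h2 := hblocksum x n (m n * q n) (le_of_eq e1.symm)
      rw [← e1] at h2
      rw [h2, Nat.mul_div_cancel _ (hqpos n), Nat.mul_mod_left]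
      simp
    obtain ⟨t, rfl⟩ : ∃ t, N = P (n + 1) + t := ⟨N - P (n + 1), by omega⟩
    have ht2 : P (n + 1) + t ≤ P (n + 2) := by omega
    have hdec := hblocksum x (n + 1) t ht2
    set d := t / q (n + 1) with hddef
    set r := t % q (n + 1) with hrdef
    have hrlt : r < q (n + 1) := Nat.mod_lt _ (hqpos (n + 1))
    have hdq : q (n + 1) * d + r = t := Nat.div_add_mod t (q (n + 1))
    have hrho : |∑ i ∈ Finset.range r, b (n + 1) i x| ≤ q (n + 1) * (R * ‖x‖) := by
      have h5 := habs x (Finset.range r) (b (n + 1)) (hbF (n + 1))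
      rw [Finset.card_range] at h5
      refine le_trans h5 (mul_le_mul_of_nonneg_right ?_ hD0)
      exact_mod_cast hrlt.le
    have hTb : |∑ k ∈ Finset.range (P n), seq k x| ≤ P n * (R * ‖x‖) := by
      have h5 := habs x (Finset.range (P n)) seq hseqF
      rwa [Finset.card_range] at h5
    have hEn : |∑ k ∈ Finset.range (P n), seq k x - P n * f x| ≤ 2 * P n * (R * ‖x‖) := by
      have h3 : (P n : ℝ) * |f x| ≤ P n * (R * ‖x‖) :=
        mul_le_mul_of_nonneg_left (hfb x) (Nat.cast_nonneg _)
      have h4 : |∑ k ∈ Finset.range (P n), seq k x - P n * f x|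
          ≤ |∑ k ∈ Finset.range (P n), seq k x| + |(P n : ℝ) * f x| := by
        rw [sub_eq_add_neg]
        exact le_trans (abs_add_le _ _) (by rw [abs_neg])
      rw [abs_mul, Nat.abs_cast] at h4
      linarith
    have hNnat : P (n + 1) + t = P n + m n * q n + (q (n + 1) * d + r) := by rw [e1, hdq]
    have hsplit : ∑ k ∈ Finset.range (P (n + 1) + t), seq k x
          - ((P (n + 1) + t : ℕ) : ℝ) * f x
        = (∑ k ∈ Finset.range (P n), seq k x - P n * f x)
          + (m n : ℝ) * ((∑ i ∈ Finset.range (q n), b n i x) - q n * f x)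
          + (d : ℝ) * ((∑ i ∈ Finset.range (q (n + 1)), b (n + 1) i x) - q (n + 1) * f x)
          + ((∑ i ∈ Finset.range r, b (n + 1) i x) - (r : ℝ) * f x) := by
      rw [hdec, hfull]
      rw [hNnat]
      push_cast
      ring
    have hb1 : |(m n : ℝ) * ((∑ i ∈ Finset.range (q n), b n i x) - q n * f x)|
        ≤ (m n : ℝ) * (q n * ee) := by
      rw [abs_mul, Nat.abs_cast]
      exact mul_le_mul_of_nonneg_left hD1 (Nat.cast_nonneg _)
    have hb2 : |(d : ℝ) * ((∑ i ∈ Finset.range (q (n + 1)), b (n + 1) i x) - q (n + 1) * f x)|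
        ≤ (d : ℝ) * (q (n + 1) * ee) := by
      rw [abs_mul, Nat.abs_cast]
      exact mul_le_mul_of_nonneg_left hD2 (Nat.cast_nonneg _)
    have hb3 : |(∑ i ∈ Finset.range r, b (n + 1) i x) - (r : ℝ) * f x|
        ≤ 2 * q (n + 1) * (R * ‖x‖) := by
      have h3 : (r : ℝ) * |f x| ≤ q (n + 1) * (R * ‖x‖) := by
        have hr' : (r : ℝ) ≤ q (n + 1) := by exact_mod_cast hrlt.le
        have := hfb x
        nlinarith [abs_nonneg (f x), Nat.cast_nonneg (α := ℝ) r]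
      have h4 : |(∑ i ∈ Finset.range r, b (n + 1) i x) - (r : ℝ) * f x|
          ≤ |∑ i ∈ Finset.range r, b (n + 1) i x| + |(r : ℝ) * f x| := by
        rw [sub_eq_add_neg]
        exact le_trans (abs_add_le _ _) (by rw [abs_neg])
      rw [abs_mul, Nat.abs_cast] at h4
      linarith
    have hbound : |∑ k ∈ Finset.range (P (n + 1) + t), seq k x
          - ((P (n + 1) + t : ℕ) : ℝ) * f x|
        ≤ 2 * P n * (R * ‖x‖) + (m n : ℝ) * (q n * ee) + (d : ℝ) * (q (n + 1) * ee)
          + 2 * q (n + 1) * (R * ‖x‖) := by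
      rw [hsplit]
      have t1 := abs_add_le
        ((∑ k ∈ Finset.range (P n), seq k x - P n * f x)
          + (m n : ℝ) * ((∑ i ∈ Finset.range (q n), b n i x) - q n * f x)
          + (d : ℝ) * ((∑ i ∈ Finset.range (q (n + 1)), b (n + 1) i x) - q (n + 1) * f x))
        ((∑ i ∈ Finset.range r, b (n + 1) i x) - (r : ℝ) * f x)
      have t2 := abs_add_le
        ((∑ k ∈ Finset.range (P n), seq k x - P n * f x)
          + (m n : ℝ) * ((∑ i ∈ Finset.range (q n), b n i x) - q n * f x))
        ((d : ℝ) * ((∑ i ∈ Finset.range (q (n + 1)), b (n + 1) i x) - q (n + 1) * f x))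
      have t3 := abs_add_le
        (∑ k ∈ Finset.range (P n), seq k x - P n * f x)
        ((m n : ℝ) * ((∑ i ∈ Finset.range (q n), b n i x) - q n * f x))
      linarith
    -- divide by N
    have hNpos : 0 < P (n + 1) + t := by have := hPge (n + 1); omega
    have hN0 : (0:ℝ) < ((P (n + 1) + t : ℕ) : ℝ) := by exact_mod_cast hNpos
    have hnpos : (0:ℝ) < (n : ℝ) + 1 := by positivity
    have c1 : ((n : ℝ) + 1) * P n ≤ ((P (n + 1) + t : ℕ) : ℝ) := by
      have : (n + 1) * P n ≤ P (n + 1) + t := le_trans (hPA n) (Nat.le_add_right _ _)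
      exact_mod_cast this
    have c2 : (m n : ℝ) * q n ≤ ((P (n + 1) + t : ℕ) : ℝ) := by
      have : m n * q n ≤ P (n + 1) + t := by omega
      exact_mod_cast this
    have c3 : (d : ℝ) * q (n + 1) ≤ ((P (n + 1) + t : ℕ) : ℝ) := by
      have : d * q (n + 1) ≤ P (n + 1) + t := by
        have h5 : d * q (n + 1) ≤ t := by rw [Nat.mul_comm]; omega
        omega
      exact_mod_cast this
    have c4 : ((n : ℝ) + 1) * q (n + 1) ≤ ((P (n + 1) + t : ℕ) : ℝ) := by
      have : (n + 1) * q (n + 1) ≤ P (n + 1) + t := le_trans (hPB n) (Nat.le_add_right _ _)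
      exact_mod_cast this
    set NR : ℝ := ((P (n + 1) + t : ℕ) : ℝ) with hNRdef
    have hD2' : (0:ℝ) ≤ 2 * (R * ‖x‖) := by linarith
    have i1 : 2 * (P n : ℝ) * (R * ‖x‖) ≤ NR * (2 * (R * ‖x‖) / (n + 1)) := by
      have hx1 : (P n : ℝ) ≤ NR / ((n : ℝ) + 1) := by
        rw [le_div_iff₀ hnpos, mul_comm]
        exact c1
      have e2 : NR * (2 * (R * ‖x‖) / (n + 1)) = 2 * (R * ‖x‖) * (NR / ((n : ℝ) + 1)) := by
        ring
      rw [e2]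
      have h6 := mul_le_mul_of_nonneg_left hx1 hD2'
      linarith
    have i2 : (m n : ℝ) * (q n * ee) ≤ NR * ee := by
      have e2 : (m n : ℝ) * (q n * ee) = ((m n : ℝ) * q n) * ee := by ring
      rw [e2]
      exact mul_le_mul_of_nonneg_right c2 hee
    have i3 : (d : ℝ) * (q (n + 1) * ee) ≤ NR * ee := by
      have e2 : (d : ℝ) * (q (n + 1) * ee) = ((d : ℝ) * q (n + 1)) * ee := by ring
      rw [e2]
      exact mul_le_mul_of_nonneg_right c3 hee
    have i4 : 2 * (q (n + 1) : ℝ) * (R * ‖x‖) ≤ NR * (2 * (R * ‖x‖) / (n + 1)) := by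
      have hx1 : (q (n + 1) : ℝ) ≤ NR / ((n : ℝ) + 1) := by
        rw [le_div_iff₀ hnpos, mul_comm]
        exact c4
      have e2 : NR * (2 * (R * ‖x‖) / (n + 1)) = 2 * (R * ‖x‖) * (NR / ((n : ℝ) + 1)) := by
        ring
      rw [e2]
      have h6 := mul_le_mul_of_nonneg_left hx1 hD2'
      linarith
    have hfin : |∑ k ∈ Finset.range (P (n + 1) + t), seq k x - NR * f x|
        ≤ NR * (2 * ee + 4 * (R * ‖x‖) / (n + 1)) := by
      have etot : NR * (2 * ee + 4 * (R * ‖x‖) / (n + 1))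
          = NR * (2 * (R * ‖x‖) / (n + 1)) + NR * ee + NR * ee
            + NR * (2 * (R * ‖x‖) / (n + 1)) := by ring
      rw [etot]
      linarith [hbound, i1, i2, i3, i4]
    have hform : (NR)⁻¹ * ∑ k ∈ Finset.range (P (n + 1) + t), seq k x - f x
        = (NR)⁻¹ * (∑ k ∈ Finset.range (P (n + 1) + t), seq k x - NR * f x) := by
      field_simp
    rw [hform, abs_mul, abs_inv, abs_of_pos hN0]
    calc (NR)⁻¹ * |∑ k ∈ Finset.range (P (n + 1) + t), seq k x - NR * f x|
        ≤ (NR)⁻¹ * (NR * (2 * ee + 4 * (R * ‖x‖) / (n + 1))) :=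
          mul_le_mul_of_nonneg_left hfin (inv_nonneg.2 hN0.le)
      _ = 2 * ee + 4 * (R * ‖x‖) / (n + 1) := by field_simp
  -- convergence at the dense points
  have hdense : ∀ i : ℕ,
      Tendsto (fun N : ℕ => (N : ℝ)⁻¹ * ∑ k ∈ Finset.range N, seq k (u i))
        atTop (nhds (f (u i))) := by
    intro i
    rw [Metric.tendsto_atTop]
    intro ε hε
    have hD0 : (0:ℝ) ≤ R * ‖u i‖ := mul_nonneg hRpos (norm_nonneg _)
    obtain ⟨n₀, hn₀i, hn₀ε⟩ : ∃ n₀ : ℕ, i ≤ n₀ ∧ (2 + 4 * (R * ‖u i‖)) / (n₀ + 1) < ε := by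
      obtain ⟨n₁, hn₁⟩ := exists_nat_gt ((2 + 4 * (R * ‖u i‖)) / ε)
      refine ⟨max i n₁, le_max_left _ _, ?_⟩
      have h1 : (n₁ : ℝ) ≤ ((max i n₁ : ℕ) : ℝ) := by
        exact_mod_cast le_max_right i n₁
      rw [div_lt_iff₀ (by positivity)]
      rw [div_lt_iff₀ hε] at hn₁
      nlinarith
    refine ⟨P (n₀ + 1), fun N hN => ?_⟩
    have h1 : P (idx N) ≤ N := hidx1 N
    have h2 : N < P (idx N + 1) := hidx2 N
    have hn : n₀ + 1 ≤ idx N :=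
      Nat.le_findGreatest (le_trans (hPge (n₀ + 1)) hN) hN
    obtain ⟨n', hn'⟩ : ∃ n', idx N = n' + 1 := ⟨idx N - 1, by omega⟩
    have hi1 : i ≤ n' := by omega
    have hi2 : i ≤ n' + 1 := by omega
    have hE1 : |(∑ j ∈ Finset.range (q n'), b n' j (u i)) - q n' * f (u i)|
        ≤ q n' * (1 / ((n' : ℝ) + 1)) := hberr n' i hi1
    have hE2 : |(∑ j ∈ Finset.range (q (n' + 1)), b (n' + 1) j (u i))
          - q (n' + 1) * f (u i)| ≤ q (n' + 1) * (1 / ((n' : ℝ) + 1)) := by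
      refine le_trans (hberr (n' + 1) i hi2)
        (mul_le_mul_of_nonneg_left ?_ (Nat.cast_nonneg _))
      rw [div_le_div_iff₀ (by positivity) (by positivity)]
      push_cast
      linarith
    have hfinal := hkey (u i) (1 / ((n' : ℝ) + 1)) (by positivity) n' N
      (by rw [← hn']; exact h1) (by rw [show n' + 2 = idx N + 1 by omega]; exact h2) hE1 hE2
    rw [Real.dist_eq]
    refine lt_of_le_of_lt hfinal ?_
    have hge : (n₀ : ℝ) + 1 ≤ (n' : ℝ) + 1 := by
      have : n₀ ≤ n' := by omega
      exact_mod_cast by omega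
    calc 2 * (1 / ((n' : ℝ) + 1)) + 4 * (R * ‖u i‖) / ((n' : ℝ) + 1)
        = (2 + 4 * (R * ‖u i‖)) / ((n' : ℝ) + 1) := by ring
      _ ≤ (2 + 4 * (R * ‖u i‖)) / ((n₀ : ℝ) + 1) := by
          apply div_le_div_of_nonneg_left (by linarith) (by positivity) hge
      _ < ε := hn₀ε
  -- extension to all of E
  have hmb : ∀ (z : E) (N : ℕ), |(N : ℝ)⁻¹ * ∑ k ∈ Finset.range N, seq k z| ≤ R * ‖z‖ := by
    intro z N
    rcases Nat.eq_zero_or_pos N with rfl | hN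
    · simpa using mul_nonneg hRpos (norm_nonneg z)
    · have h1 := habs z (Finset.range N) seq hseqF
      rw [Finset.card_range] at h1
      have hN0 : (0:ℝ) < N := by exact_mod_cast hN
      rw [abs_mul, abs_inv, Nat.abs_cast]
      calc (N : ℝ)⁻¹ * |∑ k ∈ Finset.range N, seq k z| ≤ (N : ℝ)⁻¹ * (N * (R * ‖z‖)) :=
            mul_le_mul_of_nonneg_left h1 (inv_nonneg.2 hN0.le)
        _ = R * ‖z‖ := by field_simp
  intro x
  rw [Metric.tendsto_atTop]
  intro ε hε
  obtain ⟨i, hi⟩ := Metric.denseRange_iff.1 hu x (ε / (3 * (R + 1))) (by positivity)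
  have hconv := hdense i
  rw [Metric.tendsto_atTop] at hconv
  obtain ⟨N₀, hN₀⟩ := hconv (ε / 3) (by positivity)
  refine ⟨N₀, fun N hN => ?_⟩
  have h1 := hN₀ N hN
  rw [Real.dist_eq] at h1 ⊢
  have h2 : |(N : ℝ)⁻¹ * ∑ k ∈ Finset.range N, seq k x
        - (N : ℝ)⁻¹ * ∑ k ∈ Finset.range N, seq k (u i)| ≤ R * ‖x - u i‖ := by
    have he : (N : ℝ)⁻¹ * ∑ k ∈ Finset.range N, seq k x
          - (N : ℝ)⁻¹ * ∑ k ∈ Finset.range N, seq k (u i)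
        = (N : ℝ)⁻¹ * ∑ k ∈ Finset.range N, seq k (x - u i) := by
      rw [← mul_sub, ← Finset.sum_sub_distrib]
      congr 1
      exact Finset.sum_congr rfl fun k _ => (map_sub (seq k) x (u i)).symm
    rw [he]
    exact hmb (x - u i) N
  have h3 : |f (u i) - f x| ≤ R * ‖x - u i‖ := by
    have he : f (u i) - f x = f (u i - x) := (map_sub f (u i) x).symm
    rw [he]
    calc |f (u i - x)| ≤ R * ‖u i - x‖ := hfb _
      _ = R * ‖x - u i‖ := by rw [norm_sub_rev]
  have hd : ‖x - u i‖ < ε / (3 * (R + 1)) := by rwa [dist_eq_norm] at hi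
  have h4 : R * ‖x - u i‖ ≤ ε / 3 := by
    have h5 : R * ‖x - u i‖ ≤ R * (ε / (3 * (R + 1))) :=
      mul_le_mul_of_nonneg_left hd.le hRpos
    have h6 : R * (ε / (3 * (R + 1))) ≤ (R + 1) * (ε / (3 * (R + 1))) := by
      have : (0:ℝ) ≤ ε / (3 * (R + 1)) := by positivity
      nlinarith
    have h7 : (R + 1) * (ε / (3 * (R + 1))) = ε / 3 := by
      field_simp
    linarith
  have hT : (N : ℝ)⁻¹ * ∑ k ∈ Finset.range N, seq k x - f x
      = ((N : ℝ)⁻¹ * ∑ k ∈ Finset.range N, seq k x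
          - (N : ℝ)⁻¹ * ∑ k ∈ Finset.range N, seq k (u i))
        + ((N : ℝ)⁻¹ * ∑ k ∈ Finset.range N, seq k (u i) - f (u i))
        + (f (u i) - f x) := by ring
  rw [hT]
  have t1 := abs_add_le
    (((N : ℝ)⁻¹ * ∑ k ∈ Finset.range N, seq k x
        - (N : ℝ)⁻¹ * ∑ k ∈ Finset.range N, seq k (u i))
      + ((N : ℝ)⁻¹ * ∑ k ∈ Finset.range N, seq k (u i) - f (u i)))
    (f (u i) - f x)
  have t2 := abs_add_le
    ((N : ℝ)⁻¹ * ∑ k ∈ Finset.range N, seq k x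
      - (N : ℝ)⁻¹ * ∑ k ∈ Finset.range N, seq k (u i))
    ((N : ℝ)⁻¹ * ∑ k ∈ Finset.range N, seq k (u i) - f (u i))
  linarith
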